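/- arXiv:1604.06527 — 2 statements merged into one kernel-verified Lean document; each statement's English description precedes it below -/
import Mathlib

section
/- Let L be a real Lie algebra equipped with a symmetric invariant bilinear form B which is positive definite (B(x,x) > 0 for every nonzero x ∈ L). Then every Lie algebra homomorphism φ : sl(2,ℝ) → L is zero. -/
open LieAlgebra.SpecialLinear in
private def slE : ↥(LieAlgebra.SpecialLinear.sl (Fin 2) ℝ) :=
  ⟨!![0, 1; 0, 0], LinearMap.mem_ker.mpr (by simp [Matrix.trace_fin_two])⟩

private def slF : ↥(LieAlgebra.SpecialLinear.sl (Fin 2) ℝ) :=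
  ⟨!![0, 0; 1, 0], LinearMap.mem_ker.mpr (by simp [Matrix.trace_fin_two])⟩

private def slH : ↥(LieAlgebra.SpecialLinear.sl (Fin 2) ℝ) :=
  ⟨!![1, 0; 0, -1], LinearMap.mem_ker.mpr (by simp [Matrix.trace_fin_two])⟩

private lemma sl_span (x : ↥(LieAlgebra.SpecialLinear.sl (Fin 2) ℝ)) :
    x = x.val 0 1 • slE + x.val 1 0 • slF + x.val 0 0 • slH := by
  have htr : Matrix.trace x.val = 0 := x.2
  rw [Matrix.trace_fin_two] at htr
  apply Subtype.ext
  ext i j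
  fin_cases i <;> fin_cases j <;>
    simp [slE, slF, slH, Submodule.coe_smul, AddSubmonoid.coe_add] <;> linarith

private lemma bHE : ⁅slH, slE⁆ = (2 : ℝ) • slE := by
  apply Subtype.ext
  show slH.val * slE.val - slE.val * slH.val = _
  ext i j
  fin_cases i <;> fin_cases j <;>
    simp [slE, slH, Submodule.coe_smul, Matrix.mul_apply, Fin.sum_univ_two] <;> norm_num

private lemma bHF : ⁅slH, slF⁆ = (-2 : ℝ) • slF := by
  apply Subtype.ext
  show slH.val * slF.val - slF.val * slH.val = _
  ext i j
  fin_cases i <;> fin_cases j <;>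
    simp [slF, slH, Submodule.coe_smul, Matrix.mul_apply, Fin.sum_univ_two] <;> norm_num

private lemma bEF : ⁅slE, slF⁆ = slH := by
  apply Subtype.ext
  show slE.val * slF.val - slF.val * slE.val = _
  ext i j
  fin_cases i <;> fin_cases j <;>
    simp [slE, slF, slH, Matrix.mul_apply, Fin.sum_univ_two]

/-- A real Lie algebra carrying a positive definite invariant symmetric bilinear form admits no
nonzero Lie algebra homomorphism from `sl(2,ℝ)`. -/
theorem sl2_to_compact_lie_algebra_trivial {L : Type*} [LieRing L] [LieAlgebra ℝ L]
    (B : L →ₗ[ℝ] L →ₗ[ℝ] ℝ)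
    (hsymm : ∀ x y, B x y = B y x)
    (hinv : ∀ x y z, B ⁅x, y⁆ z = B x ⁅y, z⁆)
    (hpos : ∀ x : L, x ≠ 0 → 0 < B x x)
    (φ : ↥(LieAlgebra.SpecialLinear.sl (Fin 2) ℝ) →ₗ⁅ℝ⁆ L) :
    ∀ x, φ x = 0 := by
  set e := φ slE
  set f := φ slF
  set h := φ slH
  have key : ∀ (a : ↥(LieAlgebra.SpecialLinear.sl (Fin 2) ℝ)) (c : ℝ), c ≠ 0 →
      ⁅a, a⁆ = 0 → ⁅slH, a⁆ = c • a → φ a = 0 := by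
    intro a c hc _ hbr
    by_contra hne
    have h1 : B (φ ⁅slH, a⁆) (φ a) = c * B (φ a) (φ a) := by
      rw [hbr]; simp [map_smul]
    have h2 : B (φ ⁅slH, a⁆) (φ a) = 0 := by
      rw [LieHom.map_lie, hinv, ← LieHom.map_lie]
      simp
    have := hpos (φ a) hne
    rw [h2] at h1
    rcases lt_or_gt_of_ne hc with hc' | hc' <;> nlinarith
  have he : e = 0 := key slE 2 (by norm_num) (lie_self _) bHE
  have hf : f = 0 := key slF (-2) (by norm_num) (lie_self _) bHF
  have hh : h = 0 := by
    have : h = ⁅e, f⁆ := by rw [← LieHom.map_lie, bEF]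
    rw [this, he, zero_lie]
  intro x
  rw [sl_span x]
  rw [map_add, map_add, map_smul, map_smul, map_smul]
  show x.val 0 1 • e + x.val 1 0 • f + x.val 0 0 • h = 0
  rw [he, hf, hh]
  simp
end

section
/- Fix n ≥ 1. Let Pin⁺ₙ (resp. Pin⁻ₙ) be the subgroup of the group of units of the real Clifford algebra Cl(Qₙ) (resp. Cl(−Qₙ)) generated by the images ι(v) of the unit vectors v ∈ ℝⁿ (those with x₁²+⋯+xₙ² = 1), where Qₙ(x) = x₁²+⋯+xₙ². Both groups contain the central scalar −1. Let 𝕋 be the circle group of unit complex numbers. Then the quotient groups (Pin⁺ₙ × 𝕋)/⟨(−1,−1)⟩ and (Pin⁻ₙ × 𝕋)/⟨(−1,−1)⟩ are isomorphic, where ⟨(−1,−1)⟩ denotes the central subgroup of order two generated by the pair (−1,−1). -/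
noncomputable section

/-- The standard positive definite quadratic form `Qₙ(x) = x₁² + ⋯ + xₙ²` on `ℝⁿ`. -/
def Qeuc (n : ℕ) : QuadraticForm ℝ (Fin n → ℝ) :=
  QuadraticMap.weightedSumSquares ℝ (fun _ : Fin n => (1 : ℝ))

/-- `Pin⁺ₙ`: the subgroup of the unit group of the Clifford algebra `Cl(Qₙ)` generated by the
images `ι v` of the unit vectors `v`. -/
def PinPlus (n : ℕ) : Subgroup (CliffordAlgebra (Qeuc n))ˣ :=
  Subgroup.closure {u | ∃ v : Fin n → ℝ, Qeuc n v = 1 ∧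
    (u : CliffordAlgebra (Qeuc n)) = CliffordAlgebra.ι (Qeuc n) v}

/-- `Pin⁻ₙ`: the subgroup of the unit group of the Clifford algebra `Cl(−Qₙ)` generated by the
images `ι v` of the unit vectors `v`. -/
def PinMinus (n : ℕ) : Subgroup (CliffordAlgebra (-Qeuc n))ˣ :=
  Subgroup.closure {u | ∃ v : Fin n → ℝ, Qeuc n v = 1 ∧
    (u : CliffordAlgebra (-Qeuc n)) = CliffordAlgebra.ι (-Qeuc n) v}

/-- The central subgroup `⟨(−1,−1)⟩` of `Pin⁺ₙ × 𝕋`. -/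
def ZPlus (n : ℕ) : Subgroup (↥(PinPlus n) × Circle) :=
  Subgroup.closure {x | ((x.1 : (CliffordAlgebra (Qeuc n))ˣ) = -1) ∧ ((x.2 : ℂ) = -1)}

/-- The central subgroup `⟨(−1,−1)⟩` of `Pin⁻ₙ × 𝕋`. -/
def ZMinus (n : ℕ) : Subgroup (↥(PinMinus n) × Circle) :=
  Subgroup.closure {x | ((x.1 : (CliffordAlgebra (-Qeuc n))ˣ) = -1) ∧ ((x.2 : ℂ) = -1)}

theorem closure_of_central_normal {G : Type*} [Group G] {S : Set G}
    (hS : S ⊆ (Subgroup.center G : Set G)) : (Subgroup.closure S).Normal := by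
  constructor
  intro x hx g
  have h := Subgroup.mem_center_iff.mp
    ((Subgroup.closure_le (Subgroup.center G)).mpr hS hx) g
  rw [h, mul_inv_cancel_right]
  exact hx

instance (n : ℕ) : (ZPlus n).Normal := by
  apply closure_of_central_normal
  rintro ⟨a, b⟩ ⟨ha, hb⟩
  simp only [SetLike.mem_coe, Subgroup.mem_center_iff]
  rintro ⟨c, d⟩
  refine Prod.ext ?_ (mul_comm _ _)
  · refine Subtype.ext ?_
    show (c : (CliffordAlgebra (Qeuc n))ˣ) * a = (a : (CliffordAlgebra (Qeuc n))ˣ) * c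
    rw [ha, mul_neg_one, neg_one_mul]

instance (n : ℕ) : (ZMinus n).Normal := by
  apply closure_of_central_normal
  rintro ⟨a, b⟩ ⟨ha, hb⟩
  simp only [SetLike.mem_coe, Subgroup.mem_center_iff]
  rintro ⟨c, d⟩
  refine Prod.ext ?_ (mul_comm _ _)
  · refine Subtype.ext ?_
    show (c : (CliffordAlgebra (-Qeuc n))ˣ) * a = (a : (CliffordAlgebra (-Qeuc n))ˣ) * c
    rw [ha, mul_neg_one, neg_one_mul]

section PinAuxSection
open TensorProduct CliffordAlgebra

def LAux (n : ℕ) (Q' : QuadraticForm ℝ (Fin n → ℝ)) (c : ℂ) :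
    (Fin n → ℝ) →ₗ[ℝ] ℂ ⊗[ℝ] CliffordAlgebra Q' :=
  (TensorProduct.mk ℝ ℂ (CliffordAlgebra Q') c) ∘ₗ (ι Q')

lemma LAux_apply (n : ℕ) (Q' : QuadraticForm ℝ (Fin n → ℝ)) (c : ℂ) (v : Fin n → ℝ) :
    LAux n Q' c v = c ⊗ₜ ι Q' v := rfl

lemma LAux_sq (n : ℕ) (Q' : QuadraticForm ℝ (Fin n → ℝ)) (c : ℂ) (hc : c * c = -1)
    (v : Fin n → ℝ) :
    LAux n Q' c v * LAux n Q' c v = algebraMap ℝ (ℂ ⊗[ℝ] CliffordAlgebra Q') (- Q' v) := by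
  rw [LAux_apply, Algebra.TensorProduct.tmul_mul_tmul, hc, ι_sq_scalar,
    Algebra.TensorProduct.algebraMap_apply]
  simp [Algebra.algebraMap_eq_smul_one, TensorProduct.tmul_smul, TensorProduct.smul_tmul']

/-- `Cl(Q) → ℂ ⊗ Cl(−Q)`, `ι v ↦ I ⊗ ι v`. -/
def Fm (n : ℕ) : CliffordAlgebra (Qeuc n) →ₐ[ℝ] ℂ ⊗[ℝ] CliffordAlgebra (-Qeuc n) :=
  CliffordAlgebra.lift _ ⟨LAux n (-Qeuc n) Complex.I, fun v => by
    simpa using LAux_sq n (-Qeuc n) Complex.I Complex.I_mul_I v⟩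

/-- `Cl(−Q) → ℂ ⊗ Cl(Q)`, `ι v ↦ −I ⊗ ι v`. -/
def Gp (n : ℕ) : CliffordAlgebra (-Qeuc n) →ₐ[ℝ] ℂ ⊗[ℝ] CliffordAlgebra (Qeuc n) :=
  CliffordAlgebra.lift _ ⟨LAux n (Qeuc n) (-Complex.I), fun v => by
    have : (-Complex.I) * (-Complex.I) = -1 := by simp [Complex.I_mul_I]
    simpa using LAux_sq n (Qeuc n) (-Complex.I) this v⟩

lemma Fm_ι (n : ℕ) (v : Fin n → ℝ) : Fm n (ι (Qeuc n) v) = Complex.I ⊗ₜ ι (-Qeuc n) v := by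
  rw [Fm, CliffordAlgebra.lift_ι_apply]; rfl

lemma Gp_ι (n : ℕ) (v : Fin n → ℝ) : Gp n (ι (-Qeuc n) v) = (-Complex.I) ⊗ₜ ι (Qeuc n) v := by
  rw [Gp, CliffordAlgebra.lift_ι_apply]; rfl

lemma central_commute {B : Type*} [Ring B] [Algebra ℝ B] (z : ℂ) (x : ℂ ⊗[ℝ] B) :
    Commute ((Algebra.TensorProduct.includeLeft : ℂ →ₐ[ℝ] ℂ ⊗[ℝ] B) z) x := by
  have h : (Algebra.TensorProduct.includeLeft : ℂ →ₐ[ℝ] ℂ ⊗[ℝ] B) z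
      = algebraMap ℂ (ℂ ⊗[ℝ] B) z := by
    rw [Algebra.TensorProduct.algebraMap_apply]; rfl
  rw [h]
  exact Algebra.commutes z x

/-- forward algebra hom `ℂ ⊗ Cl(Q) → ℂ ⊗ Cl(−Q)` -/
def FF (n : ℕ) : ℂ ⊗[ℝ] CliffordAlgebra (Qeuc n) →ₐ[ℝ] ℂ ⊗[ℝ] CliffordAlgebra (-Qeuc n) :=
  Algebra.TensorProduct.lift Algebra.TensorProduct.includeLeft (Fm n)
    (fun z b => central_commute z _)

def GG (n : ℕ) : ℂ ⊗[ℝ] CliffordAlgebra (-Qeuc n) →ₐ[ℝ] ℂ ⊗[ℝ] CliffordAlgebra (Qeuc n) :=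
  Algebra.TensorProduct.lift Algebra.TensorProduct.includeLeft (Gp n)
    (fun z b => central_commute z _)

lemma FF_tmul (n : ℕ) (z : ℂ) (b : CliffordAlgebra (Qeuc n)) :
    FF n (z ⊗ₜ b) = (z ⊗ₜ 1) * Fm n b := by
  rw [FF, Algebra.TensorProduct.lift_tmul]; rfl

lemma GG_tmul (n : ℕ) (z : ℂ) (b : CliffordAlgebra (-Qeuc n)) :
    GG n (z ⊗ₜ b) = (z ⊗ₜ 1) * Gp n b := by
  rw [GG, Algebra.TensorProduct.lift_tmul]; rfl

lemma tmul_one_mul_one_tmul {B : Type*} [Ring B] [Algebra ℝ B] (z : ℂ) (b : B) :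
    (z ⊗ₜ[ℝ] (1:B)) * ((1:ℂ) ⊗ₜ[ℝ] b) = z ⊗ₜ[ℝ] b := by
  rw [Algebra.TensorProduct.tmul_mul_tmul, mul_one, one_mul]

lemma one_mul_oneTmul {B : Type*} [Ring B] [Algebra ℝ B] (x : ℂ ⊗[ℝ] B) :
    ((1:ℂ) ⊗ₜ[ℝ] (1:B)) * x = x := by
  have : ((1:ℂ) ⊗ₜ[ℝ] (1:B)) = 1 := rfl
  rw [this, one_mul]

lemma GG_FF (n : ℕ) : (GG n).comp (FF n) = AlgHom.id ℝ _ := by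
  refine Algebra.TensorProduct.ext (Complex.algHom_ext ?_) (CliffordAlgebra.hom_ext ?_)
  · simp only [AlgHom.comp_apply, Algebra.TensorProduct.includeLeft_apply, AlgHom.id_apply,
      FF_tmul, GG_tmul, map_one, mul_one]
  · apply LinearMap.ext; intro v
    simp only [LinearMap.comp_apply, AlgHom.toLinearMap_apply, AlgHom.comp_apply,
      AlgHom.coe_restrictScalars', Algebra.TensorProduct.includeRight_apply, AlgHom.id_apply,
      FF_tmul, GG_tmul, map_one, one_mul, Fm_ι, Gp_ι]
    rw [one_mul_oneTmul, GG_tmul, Gp_ι, Algebra.TensorProduct.tmul_mul_tmul]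
    simp [Complex.I_mul_I]

lemma FF_GG (n : ℕ) : (FF n).comp (GG n) = AlgHom.id ℝ _ := by
  refine Algebra.TensorProduct.ext (Complex.algHom_ext ?_) (CliffordAlgebra.hom_ext ?_)
  · simp only [AlgHom.comp_apply, Algebra.TensorProduct.includeLeft_apply, AlgHom.id_apply,
      FF_tmul, GG_tmul, map_one, mul_one]
  · apply LinearMap.ext; intro v
    simp only [LinearMap.comp_apply, AlgHom.toLinearMap_apply, AlgHom.comp_apply,
      AlgHom.coe_restrictScalars', Algebra.TensorProduct.includeRight_apply, AlgHom.id_apply,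
      FF_tmul, GG_tmul, map_one, one_mul, Fm_ι, Gp_ι]
    rw [one_mul_oneTmul, FF_tmul, Fm_ι, Algebra.TensorProduct.tmul_mul_tmul]
    simp [Complex.I_mul_I]

/-- the algebra equivalence `ℂ ⊗ Cl(Q) ≃ ℂ ⊗ Cl(−Q)` -/
def EE (n : ℕ) : (ℂ ⊗[ℝ] CliffordAlgebra (Qeuc n)) ≃ₐ[ℝ] (ℂ ⊗[ℝ] CliffordAlgebra (-Qeuc n)) :=
  AlgEquiv.ofAlgHom (FF n) (GG n) (FF_GG n) (GG_FF n)

/-- induced iso on unit groups -/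
def EEu (n : ℕ) : (ℂ ⊗[ℝ] CliffordAlgebra (Qeuc n))ˣ ≃* (ℂ ⊗[ℝ] CliffordAlgebra (-Qeuc n))ˣ :=
  Units.mapEquiv (EE n).toRingEquiv.toMulEquiv

section Generic
variable (n : ℕ) (Q' : QuadraticForm ℝ (Fin n → ℝ))

def genSet : Set (CliffordAlgebra Q')ˣ :=
  {u | ∃ v : Fin n → ℝ, Qeuc n v = 1 ∧ (u : CliffordAlgebra Q') = CliffordAlgebra.ι Q' v}

def Pin' : Subgroup (CliffordAlgebra Q')ˣ := Subgroup.closure (genSet n Q')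

def Z' : Subgroup (↥(Pin' n Q') × Circle) :=
  Subgroup.closure {x | ((x.1 : (CliffordAlgebra Q')ˣ) = -1) ∧ ((x.2 : ℂ) = -1)}

instance Z'_normal : (Z' n Q').Normal := by
  apply closure_of_central_normal
  rintro ⟨a, b⟩ ⟨ha, hb⟩
  simp only [SetLike.mem_coe, Subgroup.mem_center_iff]
  rintro ⟨c, d⟩
  refine Prod.ext ?_ (mul_comm _ _)
  · refine Subtype.ext ?_
    show (c : (CliffordAlgebra Q')ˣ) * a = (a : (CliffordAlgebra Q')ˣ) * c
    rw [ha, mul_neg_one, neg_one_mul]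

variable (ε : ℝ)

lemma ι_sq (hsq : ∀ v, Q' v = ε * Qeuc n v) (v : Fin n → ℝ) (hv : Qeuc n v = 1) :
    ι Q' v * ι Q' v = algebraMap ℝ _ ε := by
  rw [ι_sq_scalar, hsq, hv, mul_one]

def uGen (hε : ε * ε = 1) (hsq : ∀ v, Q' v = ε * Qeuc n v) (v : Fin n → ℝ)
    (hv : Qeuc n v = 1) : (CliffordAlgebra Q')ˣ where
  val := ι Q' v
  inv := ε • ι Q' v
  val_inv := by
    rw [mul_smul_comm, ι_sq n Q' ε hsq v hv, Algebra.smul_def, ← map_mul, hε, map_one]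
  inv_val := by
    rw [smul_mul_assoc, ι_sq n Q' ε hsq v hv, Algebra.smul_def, ← map_mul, hε, map_one]

lemma uGen_mem (hε : ε * ε = 1) (hsq : ∀ v, Q' v = ε * Qeuc n v) (v : Fin n → ℝ)
    (hv : Qeuc n v = 1) : uGen n Q' ε hε hsq v hv ∈ Pin' n Q' :=
  Subgroup.subset_closure ⟨v, hv, rfl⟩

lemma Qeuc_single (hn : 1 ≤ n) :
    Qeuc n (Pi.single (⟨0, hn⟩ : Fin n) (1:ℝ)) = 1 := by
  simp only [Qeuc, QuadraticMap.weightedSumSquares_apply]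
  rw [Finset.sum_eq_single (⟨0, hn⟩ : Fin n)]
  · simp
  · intro b _ hb; simp [Pi.single_eq_of_ne hb]
  · simp

lemma neg_one_mem (hε : ε * ε = 1) (hsq : ∀ v, Q' v = ε * Qeuc n v) (hn : 1 ≤ n) :
    (-1 : (CliffordAlgebra Q')ˣ) ∈ Pin' n Q' := by
  set e : Fin n → ℝ := Pi.single (⟨0, hn⟩ : Fin n) (1:ℝ) with he
  have h1 : Qeuc n e = 1 := Qeuc_single n hn
  have h2 : Qeuc n ((-ε) • e) = 1 := by
    rw [QuadraticMap.map_smul, h1, smul_eq_mul, mul_one, neg_mul_neg, hε]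
  have key : (-1 : (CliffordAlgebra Q')ˣ) =
      uGen n Q' ε hε hsq e h1 * uGen n Q' ε hε hsq ((-ε) • e) h2 := by
    apply Units.ext
    show (-1 : CliffordAlgebra Q') = ι Q' e * ι Q' ((-ε) • e)
    rw [map_smul, mul_smul_comm, ι_sq n Q' ε hsq e h1, Algebra.smul_def, ← map_mul,
      neg_mul, hε, map_neg, map_one]
  rw [key]
  exact mul_mem (uGen_mem n Q' ε hε hsq e h1) (uGen_mem n Q' ε hε hsq _ h2)

end Generic

section Homs
variable (n : ℕ) (Q' : QuadraticForm ℝ (Fin n → ℝ))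

def incRight : CliffordAlgebra Q' →ₐ[ℝ] ℂ ⊗[ℝ] CliffordAlgebra Q' :=
  Algebra.TensorProduct.includeRight

def pinHom : ↥(Pin' n Q') →* (ℂ ⊗[ℝ] CliffordAlgebra Q')ˣ :=
  (Units.map (incRight n Q').toRingHom.toMonoidHom).comp (Pin' n Q').subtype

lemma pinHom_val (u : ↥(Pin' n Q')) :
    ((pinHom n Q' u : (ℂ ⊗[ℝ] CliffordAlgebra Q')ˣ) : ℂ ⊗[ℝ] CliffordAlgebra Q')
      = 1 ⊗ₜ ((u : (CliffordAlgebra Q')ˣ) : CliffordAlgebra Q') := rfl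

def circHom : Circle →* (ℂ ⊗[ℝ] CliffordAlgebra Q')ˣ :=
  (Units.map (algebraMap ℂ (ℂ ⊗[ℝ] CliffordAlgebra Q')).toMonoidHom).comp Circle.toUnits

lemma circHom_val (z : Circle) :
    ((circHom n Q' z : (ℂ ⊗[ℝ] CliffordAlgebra Q')ˣ) : ℂ ⊗[ℝ] CliffordAlgebra Q')
      = (z : ℂ) ⊗ₜ 1 := by
  show algebraMap ℂ (ℂ ⊗[ℝ] CliffordAlgebra Q') (z : ℂ) = (z : ℂ) ⊗ₜ 1
  rw [Algebra.TensorProduct.algebraMap_apply, Algebra.algebraMap_self_apply]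

lemma phi_comm : ∀ (m : ↥(Pin' n Q')) (z : Circle),
    Commute (pinHom n Q' m) (circHom n Q' z) := by
  intro m z
  apply Units.ext
  show (pinHom n Q' m).val * (circHom n Q' z).val
      = (circHom n Q' z).val * (pinHom n Q' m).val
  rw [pinHom_val, circHom_val, Algebra.TensorProduct.tmul_mul_tmul,
    Algebra.TensorProduct.tmul_mul_tmul]
  rw [one_mul, mul_one, mul_one, one_mul]

def Phi : ↥(Pin' n Q') × Circle →* (ℂ ⊗[ℝ] CliffordAlgebra Q')ˣ :=
  (pinHom n Q').noncommCoprod (circHom n Q') (phi_comm n Q')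

lemma Phi_val (x : ↥(Pin' n Q') × Circle) :
    ((Phi n Q' x : (ℂ ⊗[ℝ] CliffordAlgebra Q')ˣ) : ℂ ⊗[ℝ] CliffordAlgebra Q')
      = (x.2 : ℂ) ⊗ₜ ((x.1 : (CliffordAlgebra Q')ˣ) : CliffordAlgebra Q') := by
  show ((pinHom n Q' x.1 * circHom n Q' x.2 : _ˣ) : ℂ ⊗[ℝ] CliffordAlgebra Q') = _
  rw [Units.val_mul, pinHom_val, circHom_val, Algebra.TensorProduct.tmul_mul_tmul,
    one_mul, mul_one]

end Homs

section Kernel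
variable (n : ℕ) (Q' : QuadraticForm ℝ (Fin n → ℝ))

def TRe (B : Type*) [AddCommGroup B] [Module ℝ B] : ℂ ⊗[ℝ] B →ₗ[ℝ] B :=
  (TensorProduct.lid ℝ B).toLinearMap ∘ₗ (LinearMap.rTensor B Complex.reLm)

def TIm (B : Type*) [AddCommGroup B] [Module ℝ B] : ℂ ⊗[ℝ] B →ₗ[ℝ] B :=
  (TensorProduct.lid ℝ B).toLinearMap ∘ₗ (LinearMap.rTensor B Complex.imLm)

@[simp] lemma TRe_tmul (B : Type*) [AddCommGroup B] [Module ℝ B] (z : ℂ) (b : B) :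
    TRe B (z ⊗ₜ b) = z.re • b := by
  simp [TRe, LinearMap.rTensor_tmul]

@[simp] lemma TIm_tmul (B : Type*) [AddCommGroup B] [Module ℝ B] (z : ℂ) (b : B) :
    TIm B (z ⊗ₜ b) = z.im • b := by
  simp [TIm, LinearMap.rTensor_tmul]

lemma ker_Phi (hε : ∃ ε : ℝ, ε * ε = 1 ∧ ∀ v, Q' v = ε * Qeuc n v)
    [Nontrivial (CliffordAlgebra Q')] :
    (Phi n Q').ker = Z' n Q' := by
  apply le_antisymm
  · -- ker ≤ Z'
    intro x hx
    have hx' : ((Phi n Q' x : (ℂ ⊗[ℝ] CliffordAlgebra Q')ˣ) : ℂ ⊗[ℝ] CliffordAlgebra Q')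
        = 1 := by rw [show Phi n Q' x = 1 from hx]; rfl
    rw [Phi_val] at hx'
    set u : CliffordAlgebra Q' := ((x.1 : (CliffordAlgebra Q')ˣ) : CliffordAlgebra Q')
    set z : ℂ := (x.2 : ℂ)
    have h1 : (1 : ℂ ⊗[ℝ] CliffordAlgebra Q') = (1:ℂ) ⊗ₜ (1:CliffordAlgebra Q') := rfl
    rw [h1] at hx'
    have hre : z.re • u = (1 : CliffordAlgebra Q') := by
      have := congrArg (TRe (CliffordAlgebra Q')) hx'
      simpa using this
    have him : z.im • u = 0 := by
      have := congrArg (TIm (CliffordAlgebra Q')) hx'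
      simpa using this
    have hu0 : u ≠ 0 := by
      intro h
      have : ((x.1 : (CliffordAlgebra Q')ˣ) * (x.1 : (CliffordAlgebra Q')ˣ)⁻¹ :
          (CliffordAlgebra Q')ˣ).val = (1 : CliffordAlgebra Q') := by
        rw [mul_inv_cancel]; rfl
      rw [Units.val_mul] at this
      change u * _ = _ at this
      rw [h, zero_mul] at this
      exact zero_ne_one this
    have him0 : z.im = 0 := by
      rcases smul_eq_zero.mp him with h | h
      · exact h
      · exact absurd h hu0
    have habs : ‖z‖ = 1 := Circle.norm_coe x.2
    have hz : (z.re : ℂ) = z := Complex.ext rfl (by simp [him0])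
    have hre2 : |z.re| = 1 := by
      rw [← Real.norm_eq_abs, ← Complex.norm_real, hz, habs]
    rcases abs_eq (by norm_num : (0:ℝ) ≤ 1) |>.mp hre2 with h | h
    · -- z = 1, u = 1
      have hu : u = 1 := by rw [h, one_smul] at hre; exact hre
      have hx1 : x.1 = 1 := Subtype.ext (Units.ext hu)
      have hx2 : x.2 = 1 := Subtype.ext (by show z = _; rw [← hz, h, Circle.coe_one]; norm_num)
      have : x = 1 := Prod.ext hx1 hx2
      rw [this]; exact one_mem _
    · -- z = -1, u = -1
      have hu : u = -1 := by
        rw [h, neg_smul, one_smul, neg_eq_iff_eq_neg] at hre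
        rw [hre]
      apply Subgroup.subset_closure
      refine ⟨Units.ext ?_, ?_⟩
      · rw [Units.val_neg, Units.val_one]; exact hu
      · show z = -1
        rw [← hz, h]; norm_num
  · -- Z' ≤ ker
    rw [Z', Subgroup.closure_le]
    rintro x ⟨h1, h2⟩
    show Phi n Q' x = 1
    apply Units.ext
    rw [Phi_val, h2, h1]
    show ((-1 : ℂ)) ⊗ₜ (((-1 : (CliffordAlgebra Q')ˣ) : (CliffordAlgebra Q')ˣ) :
      CliffordAlgebra Q') = 1
    rw [Units.val_neg, Units.val_one]
    rw [TensorProduct.neg_tmul, TensorProduct.tmul_neg, neg_neg]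
    rfl

end Kernel

section Range

lemma noncommCoprod_range {M N P : Type*} [Group M] [Group N] [Group P]
    (f : M →* P) (g : N →* P) (comm : ∀ m n, Commute (f m) (g n)) :
    (f.noncommCoprod g comm).range = f.range ⊔ g.range := by
  apply le_antisymm
  · rintro _ ⟨⟨m, k⟩, rfl⟩
    rw [MonoidHom.noncommCoprod_apply]
    exact mul_mem (le_sup_left (α := Subgroup P) ⟨m, rfl⟩)
      (le_sup_right (α := Subgroup P) ⟨k, rfl⟩)
  · rw [sup_le_iff]
    constructor
    · rintro _ ⟨m, rfl⟩
      exact ⟨(m, 1), by rw [MonoidHom.noncommCoprod_apply, map_one, mul_one]⟩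
    · rintro _ ⟨k, rfl⟩
      exact ⟨(1, k), by rw [MonoidHom.noncommCoprod_apply, map_one, one_mul]⟩

variable (n : ℕ)

/-- the unit `I` of the circle -/
def IC : Circle := ⟨Complex.I, by simp [Circle, Submonoid.unitSphere]⟩

lemma IC_coe : (IC : ℂ) = Complex.I := rfl

end Range

section RangeEq
variable (n : ℕ)

lemma hsqP : ∀ v, Qeuc n v = (1:ℝ) * Qeuc n v := fun v => (one_mul _).symm
lemma hsqM : ∀ v, (-Qeuc n) v = (-1:ℝ) * Qeuc n v := fun v => by
  rw [QuadraticMap.neg_apply, neg_one_mul]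
lemma hεP : (1:ℝ) * 1 = 1 := one_mul 1
lemma hεM : (-1:ℝ) * (-1) = 1 := by norm_num

def Psi : ↥(Pin' n (Qeuc n)) × Circle →* (ℂ ⊗[ℝ] CliffordAlgebra (-Qeuc n))ˣ :=
  (EEu n).toMonoidHom.comp (Phi n (Qeuc n))

lemma ker_Psi : (Psi n).ker = Z' n (Qeuc n) := by
  have h : (Psi n).ker = (Phi n (Qeuc n)).ker := by
    ext x
    simp only [Psi, MonoidHom.mem_ker, MonoidHom.comp_apply, MulEquiv.coe_toMonoidHom]
    exact (EEu n).map_eq_one_iff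
  rw [h]
  exact ker_Phi n (Qeuc n) ⟨1, hεP, hsqP n⟩

-- value computations
lemma EEu_val (x : (ℂ ⊗[ℝ] CliffordAlgebra (Qeuc n))ˣ) :
    ((EEu n x : (ℂ ⊗[ℝ] CliffordAlgebra (-Qeuc n))ˣ) : ℂ ⊗[ℝ] CliffordAlgebra (-Qeuc n))
      = FF n (x : ℂ ⊗[ℝ] CliffordAlgebra (Qeuc n)) := rfl

lemma claimA : (EEu n).toMonoidHom.comp (circHom n (Qeuc n)) = circHom n (-Qeuc n) := by
  ext z
  show FF n ((circHom n (Qeuc n) z : _ˣ) : ℂ ⊗[ℝ] CliffordAlgebra (Qeuc n)) = _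
  rw [circHom_val, circHom_val, FF_tmul, map_one, mul_one]

/-- the composite `h⁺` on units -/
def hP : (CliffordAlgebra (Qeuc n))ˣ →* (ℂ ⊗[ℝ] CliffordAlgebra (-Qeuc n))ˣ :=
  (EEu n).toMonoidHom.comp (Units.map (incRight n (Qeuc n)).toRingHom.toMonoidHom)

lemma hP_val (u : (CliffordAlgebra (Qeuc n))ˣ) :
    ((hP n u : (ℂ ⊗[ℝ] CliffordAlgebra (-Qeuc n))ˣ) : ℂ ⊗[ℝ] CliffordAlgebra (-Qeuc n))
      = FF n (1 ⊗ₜ (u : CliffordAlgebra (Qeuc n))) := rfl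

lemma EEu_pinHom_range :
    ((EEu n).toMonoidHom.comp (pinHom n (Qeuc n))).range
      = Subgroup.closure ((hP n) '' genSet n (Qeuc n)) := by
  rw [pinHom, ← MonoidHom.comp_assoc, MonoidHom.range_comp, Subgroup.range_subtype,
    Pin', MonoidHom.map_closure]
  rfl

lemma pinHom_range (Q' : QuadraticForm ℝ (Fin n → ℝ)) :
    (pinHom n Q').range = Subgroup.closure
      ((Units.map (incRight n Q').toRingHom.toMonoidHom) '' genSet n Q') := by
  rw [pinHom, MonoidHom.range_comp, Subgroup.range_subtype, Pin', MonoidHom.map_closure]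

lemma hP_genSet_val (u : (CliffordAlgebra (Qeuc n))ˣ) (v : Fin n → ℝ)
    (huv : (u : CliffordAlgebra (Qeuc n)) = CliffordAlgebra.ι (Qeuc n) v) :
    ((hP n u : (ℂ ⊗[ℝ] CliffordAlgebra (-Qeuc n))ˣ) : ℂ ⊗[ℝ] CliffordAlgebra (-Qeuc n))
      = Complex.I ⊗ₜ CliffordAlgebra.ι (-Qeuc n) v := by
  rw [hP_val, huv, FF_tmul, one_mul_oneTmul, Fm_ι]

lemma incu_genSet_val (u : (CliffordAlgebra (-Qeuc n))ˣ)
    (v : Fin n → ℝ) (huv : (u : CliffordAlgebra (-Qeuc n)) = CliffordAlgebra.ι (-Qeuc n) v) :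
    (((Units.map (incRight n (-Qeuc n)).toRingHom.toMonoidHom u) :
      (ℂ ⊗[ℝ] CliffordAlgebra (-Qeuc n))ˣ) : ℂ ⊗[ℝ] CliffordAlgebra (-Qeuc n))
      = 1 ⊗ₜ CliffordAlgebra.ι (-Qeuc n) v := by
  show (incRight n (-Qeuc n)) (u : CliffordAlgebra (-Qeuc n)) = _
  rw [huv]; rfl

lemma circIC_val :
    ((circHom n (-Qeuc n) IC : (ℂ ⊗[ℝ] CliffordAlgebra (-Qeuc n))ˣ) :
      ℂ ⊗[ℝ] CliffordAlgebra (-Qeuc n)) = Complex.I ⊗ₜ 1 := by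
  rw [circHom_val, IC_coe]

lemma claimB :
    ((EEu n).toMonoidHom.comp (pinHom n (Qeuc n))).range ⊔ (circHom n (-Qeuc n)).range
      = (pinHom n (-Qeuc n)).range ⊔ (circHom n (-Qeuc n)).range := by
  apply le_antisymm
  · rw [sup_le_iff]
    refine ⟨?_, le_sup_right⟩
    rw [EEu_pinHom_range, Subgroup.closure_le]
    rintro _ ⟨u, ⟨v, hv, huv⟩, rfl⟩
    have key : hP n u = circHom n (-Qeuc n) IC
        * pinHom n (-Qeuc n) ⟨uGen n (-Qeuc n) (-1) (hεM) (hsqM n) v hv,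
            uGen_mem n (-Qeuc n) (-1) (hεM) (hsqM n) v hv⟩ := by
      apply Units.ext
      rw [Units.val_mul, hP_genSet_val n u v huv]
      show _ = ((circHom n (-Qeuc n) IC : _ˣ) : ℂ ⊗[ℝ] CliffordAlgebra (-Qeuc n))
        * ((Units.map (incRight n (-Qeuc n)).toRingHom.toMonoidHom
            (uGen n (-Qeuc n) (-1) (hεM) (hsqM n) v hv) : _ˣ) :
              ℂ ⊗[ℝ] CliffordAlgebra (-Qeuc n))
      rw [circIC_val, incu_genSet_val n _ v rfl, Algebra.TensorProduct.tmul_mul_tmul,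
        mul_one, one_mul]
    rw [key]
    exact SetLike.mem_coe.mpr (mul_mem
      (le_sup_right (α := Subgroup _) ⟨IC, rfl⟩)
      (le_sup_left (α := Subgroup _) ⟨_, rfl⟩))
  · rw [sup_le_iff]
    refine ⟨?_, le_sup_right⟩
    rw [pinHom_range, Subgroup.closure_le]
    rintro _ ⟨u, ⟨v, hv, huv⟩, rfl⟩
    have key : circHom n (-Qeuc n) IC
        * Units.map (incRight n (-Qeuc n)).toRingHom.toMonoidHom u
        = hP n (uGen n (Qeuc n) 1 (hεP) (hsqP n) v hv) := by
      apply Units.ext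
      rw [Units.val_mul, hP_genSet_val n _ v rfl, circIC_val, incu_genSet_val n u v huv,
        Algebra.TensorProduct.tmul_mul_tmul, mul_one, one_mul]
    have h2 : Units.map (incRight n (-Qeuc n)).toRingHom.toMonoidHom u
        = (circHom n (-Qeuc n) IC)⁻¹ * hP n (uGen n (Qeuc n) 1 (hεP) (hsqP n) v hv) := by
      rw [← key, inv_mul_cancel_left]
    rw [h2]
    refine SetLike.mem_coe.mpr (mul_mem
      (inv_mem (le_sup_right (α := Subgroup _) ⟨IC, rfl⟩)) ?_)
    apply le_sup_left (α := Subgroup _)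
    have : hP n (uGen n (Qeuc n) 1 (hεP) (hsqP n) v hv)
        = ((EEu n).toMonoidHom.comp (pinHom n (Qeuc n)))
            ⟨uGen n (Qeuc n) 1 (hεP) (hsqP n) v hv,
              uGen_mem n (Qeuc n) 1 (hεP) (hsqP n) v hv⟩ := rfl
    rw [this]
    exact ⟨_, rfl⟩

lemma range_Psi : (Psi n).range = (Phi n (-Qeuc n)).range := by
  rw [Psi, Phi, MonoidHom.comp_noncommCoprod, noncommCoprod_range, Phi, noncommCoprod_range,
    claimA, claimB]

end RangeEq

end PinAuxSection

open TensorProduct CliffordAlgebra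

/-- The groups `Pin⁺ₙ` and `Pin⁻ₙ` both contain the central scalar `−1`, and the quotients
`(Pin⁺ₙ × 𝕋)/⟨(−1,−1)⟩` and `(Pin⁻ₙ × 𝕋)/⟨(−1,−1)⟩` are isomorphic groups. -/
theorem pinc_plus_iso_pinc_minus (n : ℕ) (hn : 1 ≤ n) :
    ((-1 : (CliffordAlgebra (Qeuc n))ˣ) ∈ PinPlus n) ∧
    ((-1 : (CliffordAlgebra (-Qeuc n))ˣ) ∈ PinMinus n) ∧
    Nonempty (((↥(PinPlus n) × Circle) ⧸ ZPlus n) ≃* ((↥(PinMinus n) × Circle) ⧸ ZMinus n)) := by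
  have hZP : Z' n (Qeuc n) = (Psi n).ker := (ker_Psi n).symm
  have hZM : (Phi n (-Qeuc n)).ker = Z' n (-Qeuc n) := ker_Phi n (-Qeuc n) ⟨-1, hεM, hsqM n⟩
  refine ⟨neg_one_mem n (Qeuc n) 1 hεP (hsqP n) hn,
    neg_one_mem n (-Qeuc n) (-1) hεM (hsqM n) hn, ⟨?_⟩⟩
  have e : ((↥(Pin' n (Qeuc n)) × Circle) ⧸ Z' n (Qeuc n))
      ≃* ((↥(Pin' n (-Qeuc n)) × Circle) ⧸ Z' n (-Qeuc n)) :=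
    ((((QuotientGroup.quotientMulEquivOfEq hZP).trans
    (QuotientGroup.quotientKerEquivRange (Psi n))).trans
    (MulEquiv.subgroupCongr (range_Psi n))).trans
    ((QuotientGroup.quotientKerEquivRange (Phi n (-Qeuc n))).symm)).trans
    (QuotientGroup.quotientMulEquivOfEq hZM)
  exact e

end
end
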